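/- The sum K_α(X;Y) + H_α(X,Y) is nonincreasing in α: for 0 < α ≤ α', K_{α'}(X;Y) + H_{α'}(X,Y) ≤ K_α(X;Y) + H_α(X,Y). -/

import Mathlib

open scoped ENNReal BigOperators
open Finset

/-- Kullback-Leibler divergence between two PMFs on a finite set, valued in `EReal`
(`⊤` when `P` is not absolutely continuous w.r.t. `Q`). -/
noncomputable def klDiv {X : Type*} [Fintype X] (P Q : X → ℝ≥0∞) : EReal :=
  if ∀ x, Q x = 0 → P x = 0 then
    (((∑ x, (P x).toReal * Real.log ((P x).toReal / (Q x).toReal)) : ℝ) : EReal)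
  else ⊤

/-- Rényi divergence of order `α` (KL divergence at `α = 1`).  The ENNReal conventions
`0 * ⊤ = 0` and `0 ^ y = ⊤` for `y < 0` encode `0/0 = 0` and `p/0 = ∞`. -/
noncomputable def renyiDiv {X : Type*} [Fintype X] (α : ℝ) (P Q : X → ℝ≥0∞) : EReal :=
  if α = 1 then klDiv P Q
  else (((α - 1)⁻¹ : ℝ) : EReal) * ENNReal.log (∑ x, P x ^ α * Q x ^ (1 - α))

/-- Relative α-entropy (Sundaresan's divergence); KL divergence at `α = 1`. -/
noncomputable def relAlphaEnt {X : Type*} [Fintype X] (α : ℝ) (P Q : X → ℝ≥0∞) : EReal :=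
  if α = 1 then klDiv P Q
  else ((α / (1 - α) : ℝ) : EReal) * ENNReal.log (∑ x, P x * Q x ^ (α - 1))
    + ENNReal.log (∑ x, Q x ^ α)
    - (((1 - α)⁻¹ : ℝ) : EReal) * ENNReal.log (∑ x, P x ^ α)

/-- The set of PMFs on a finite type, as a subtype. -/
def PMFon (X : Type*) [Fintype X] : Type _ := {p : X → ℝ≥0∞ // ∑ x, p x = 1}

noncomputable def margX {X Y : Type*} [Fintype X] [Fintype Y] (P : X × Y → ℝ≥0∞) : X → ℝ≥0∞ :=
  fun x => ∑ y, P (x, y)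

noncomputable def margY {X Y : Type*} [Fintype X] [Fintype Y] (P : X × Y → ℝ≥0∞) : Y → ℝ≥0∞ :=
  fun y => ∑ x, P (x, y)

/-- Mutual information of a joint PMF. -/
noncomputable def mutualInfo {X Y : Type*} [Fintype X] [Fintype Y] (P : X × Y → ℝ≥0∞) : EReal :=
  klDiv P (fun p => margX P p.1 * margY P p.2)

/-- The dependence measure `J_α`. -/
noncomputable def Jalpha {X Y : Type*} [Fintype X] [Fintype Y] (α : ℝ) (P : X × Y → ℝ≥0∞) :
    EReal :=
  ⨅ (Q : PMFon X × PMFon Y), renyiDiv α P (fun p => Q.1.1 p.1 * Q.2.1 p.2)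

/-- The dependence measure `K_α`. -/
noncomputable def Kalpha {X Y : Type*} [Fintype X] [Fintype Y] (α : ℝ) (P : X × Y → ℝ≥0∞) :
    EReal :=
  ⨅ (Q : PMFon X × PMFon Y), relAlphaEnt α P (fun p => Q.1.1 p.1 * Q.2.1 p.2)

/-- Rényi entropy of order `β`. -/
noncomputable def renyiEnt {X : Type*} [Fintype X] (β : ℝ) (P : X → ℝ≥0∞) : EReal :=
  if β = 1 then (((∑ x, (P x).toReal * Real.log (P x).toReal⁻¹ : ℝ)) : EReal)
  else (((1 - β)⁻¹ : ℝ) : EReal) * ENNReal.log (∑ x, P x ^ β)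

/-- Min-entropy. -/
noncomputable def minEnt {X : Type*} [Fintype X] (P : X → ℝ≥0∞) : EReal :=
  - ENNReal.log (⨆ x, P x)


/-- `K_α(X;Y) + H_α(X,Y)` is nonincreasing in `α` on `(0, ∞)`. -/
-- Real power-mean core inequality for positive exponents
lemma powmean_aux {ι : Type*} [Fintype ι] (w z : ι → ℝ) (hw : ∀ i, 0 ≤ w i)
    (hw1 : ∑ i, w i = 1) (hz : ∀ i, 0 ≤ z i) {a b : ℝ} (ha : 0 < a) (hab : a ≤ b)
    (hpos : 0 < ∑ i, w i * z i ^ a) :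
    a⁻¹ * Real.log (∑ i, w i * z i ^ a) ≤ b⁻¹ * Real.log (∑ i, w i * z i ^ b) := by
  have hb : 0 < b := lt_of_lt_of_le ha hab
  have hc : 1 ≤ b / a := (one_le_div ha).2 hab
  have key := Real.rpow_arith_mean_le_arith_mean_rpow Finset.univ w (fun i => z i ^ a)
      (fun i _ => hw i) hw1 (fun i _ => Real.rpow_nonneg (hz i) a) hc
  have hz2 : ∀ i, (z i ^ a) ^ (b / a) = z i ^ b := by
    intro i
    rw [← Real.rpow_mul (hz i)]
    congr 1
    field_simp
  simp only [hz2] at key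
  have h1 : (b / a) * Real.log (∑ i, w i * z i ^ a) ≤ Real.log (∑ i, w i * z i ^ b) := by
    calc (b / a) * Real.log (∑ i, w i * z i ^ a)
        = Real.log ((∑ i, w i * z i ^ a) ^ (b / a)) := (Real.log_rpow hpos _).symm
      _ ≤ Real.log (∑ i, w i * z i ^ b) :=
          Real.log_le_log (Real.rpow_pos_of_pos hpos _) key
  calc a⁻¹ * Real.log (∑ i, w i * z i ^ a)
      = b⁻¹ * ((b / a) * Real.log (∑ i, w i * z i ^ a)) := by
        field_simp
    _ ≤ b⁻¹ * Real.log (∑ i, w i * z i ^ b) := by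
        exact mul_le_mul_of_nonneg_left h1 (by positivity)

-- weighted AM-GM in log form
lemma amgm_aux {ι : Type*} [Fintype ι] (w z : ι → ℝ) (hw : ∀ i, 0 ≤ w i)
    (hw1 : ∑ i, w i = 1) (hz : ∀ i, 0 ≤ z i) (hzp : ∀ i, w i ≠ 0 → 0 < z i) :
    ∑ i, w i * Real.log (z i) ≤ Real.log (∑ i, w i * z i) := by
  have key := Real.geom_mean_le_arith_mean_weighted Finset.univ w z
      (fun i _ => hw i) hw1 (fun i _ => hz i)
  have hprodpos : 0 < ∏ i, z i ^ w i := by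
    apply Finset.prod_pos
    intro i _
    rcases eq_or_ne (w i) 0 with h0 | h0
    · rw [h0, Real.rpow_zero]; exact one_pos
    · exact Real.rpow_pos_of_pos (hzp i h0) _
  calc ∑ i, w i * Real.log (z i)
      = Real.log (∏ i, z i ^ w i) := by
        rw [Real.log_prod]
        · refine Finset.sum_congr rfl fun i _ => ?_
          rcases eq_or_ne (w i) 0 with h0 | h0
          · simp [h0]
          · rw [Real.log_rpow (hzp i h0)]
        · intro i _
          rcases eq_or_ne (w i) 0 with h0 | h0
          · rw [h0, Real.rpow_zero]; exact one_ne_zero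
          · exact ne_of_gt (Real.rpow_pos_of_pos (hzp i h0) _)
    _ ≤ Real.log (∑ i, w i * z i) := Real.log_le_log hprodpos key

-- comparison of psi(0) with psi(s), s ≠ 0
lemma amgm_rpow {ι : Type*} [Fintype ι] (w ρ : ι → ℝ) (hw : ∀ i, 0 ≤ w i)
    (hw1 : ∑ i, w i = 1) (hρ : ∀ i, 0 ≤ ρ i) (hsp : ∀ i, w i ≠ 0 → 0 < ρ i) (s : ℝ) :
    s * ∑ i, w i * Real.log (ρ i) ≤ Real.log (∑ i, w i * ρ i ^ s) := by
  have key := amgm_aux w (fun i => ρ i ^ s) hw hw1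
      (fun i => Real.rpow_nonneg (hρ i) s)
      (fun i hi => Real.rpow_pos_of_pos (hsp i hi) s)
  have h1 : ∑ i, w i * Real.log (ρ i ^ s) = s * ∑ i, w i * Real.log (ρ i) := by
    rw [Finset.mul_sum]
    refine Finset.sum_congr rfl fun i _ => ?_
    rcases eq_or_ne (w i) 0 with h0 | h0
    · simp [h0]
    · rw [Real.log_rpow (hsp i h0)]; ring
  rw [h1] at key
  exact key

-- power mean for negative exponents
lemma powmean_neg {ι : Type*} [Fintype ι] (w ρ : ι → ℝ) (hw : ∀ i, 0 ≤ w i)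
    (hw1 : ∑ i, w i = 1) (hρ : ∀ i, 0 ≤ ρ i) (hsp : ∀ i, w i ≠ 0 → 0 < ρ i)
    {a b : ℝ} (hab : a ≤ b) (hb : b < 0) :
    a⁻¹ * Real.log (∑ i, w i * ρ i ^ a) ≤ b⁻¹ * Real.log (∑ i, w i * ρ i ^ b) := by
  set σ : ι → ℝ := fun i => if w i = 0 then 0 else (ρ i)⁻¹ with hσ
  have hσnn : ∀ i, 0 ≤ σ i := by
    intro i; rw [hσ]; dsimp only
    split_ifs
    · exact le_refl 0
    · exact inv_nonneg.2 (hρ i)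
  have hkey : ∀ s : ℝ, ∑ i, w i * σ i ^ (-s) = ∑ i, w i * ρ i ^ s := by
    intro s
    refine Finset.sum_congr rfl fun i _ => ?_
    rcases eq_or_ne (w i) 0 with h0 | h0
    · simp [h0]
    · have hρi := hsp i h0
      rw [hσ]; dsimp only
      rw [if_neg h0, Real.inv_rpow (hρ i), Real.rpow_neg (hρ i), inv_inv]
  have hex : ∃ i, w i ≠ 0 := by
    by_contra hc
    push_neg at hc
    rw [Finset.sum_eq_zero (fun i _ => hc i)] at hw1
    exact one_ne_zero hw1.symm
  obtain ⟨i0, hi0⟩ := hex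
  have hpos : 0 < ∑ i, w i * σ i ^ (-b) := by
    apply Finset.sum_pos' (fun i _ => mul_nonneg (hw i) (Real.rpow_nonneg (hσnn i) _))
    refine ⟨i0, Finset.mem_univ i0, ?_⟩
    have : 0 < σ i0 := by rw [hσ]; dsimp only; rw [if_neg hi0]; exact inv_pos.2 (hsp i0 hi0)
    exact mul_pos (lt_of_le_of_ne (hw i0) (Ne.symm hi0)) (Real.rpow_pos_of_pos this _)
  have key := powmean_aux w σ hw hw1 hσnn (a := -b) (b := -a)
      (by linarith) (by linarith) hpos
  rw [hkey, hkey] at key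
  simp only [← neg_inv, neg_mul, neg_le_neg_iff] at key
  exact key

lemma log_le_psi {ι : Type*} [Fintype ι] (w ρ : ι → ℝ) (hw : ∀ i, 0 ≤ w i)
    (hw1 : ∑ i, w i = 1) (hρ : ∀ i, 0 ≤ ρ i) (hsp : ∀ i, w i ≠ 0 → 0 < ρ i)
    {s : ℝ} (hs : 0 < s) :
    ∑ i, w i * Real.log (ρ i) ≤ s⁻¹ * Real.log (∑ i, w i * ρ i ^ s) := by
  have key := amgm_rpow w ρ hw hw1 hρ hsp s
  have := mul_le_mul_of_nonneg_left key (le_of_lt (inv_pos.2 hs))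
  rw [← mul_assoc, inv_mul_cancel₀ (ne_of_gt hs), one_mul] at this
  exact this

lemma psi_le_log {ι : Type*} [Fintype ι] (w ρ : ι → ℝ) (hw : ∀ i, 0 ≤ w i)
    (hw1 : ∑ i, w i = 1) (hρ : ∀ i, 0 ≤ ρ i) (hsp : ∀ i, w i ≠ 0 → 0 < ρ i)
    {s : ℝ} (hs : s < 0) :
    s⁻¹ * Real.log (∑ i, w i * ρ i ^ s) ≤ ∑ i, w i * Real.log (ρ i) := by
  have key := amgm_rpow w ρ hw hw1 hρ hsp s
  have h2 := mul_le_mul_of_nonpos_left key (le_of_lt (inv_neg''.2 hs))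
  rw [← mul_assoc, inv_mul_cancel₀ (ne_of_lt hs), one_mul] at h2
  exact h2

/-- The function whose antitonicity in `t` encodes the power-mean inequality. -/
noncomputable def phi {ι : Type*} [Fintype ι] (w r : ι → ℝ≥0∞) (t : ℝ) : EReal :=
  if t = 0 then
    (if ∀ p, r p = 0 → w p = 0 then
      ((-∑ p, (w p).toReal * Real.log (r p).toReal : ℝ) : EReal) else ⊤)
  else ((-t⁻¹ : ℝ) : EReal) * ENNReal.log (∑ p, w p * r p ^ t)

lemma log_toReal {x : ℝ≥0∞} (h0 : x ≠ 0) (hT : x ≠ ⊤) :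
    ENNReal.log x = ((Real.log x.toReal : ℝ) : EReal) := by
  rw [ENNReal.log]
  simp [h0, hT]

lemma sum_toReal_rpow {ι : Type*} [Fintype ι] (w r : ι → ℝ≥0∞) {s : ℝ}
    (h : ∀ p, w p * r p ^ s ≠ ⊤) :
    (∑ p, w p * r p ^ s).toReal = ∑ p, (w p).toReal * (r p).toReal ^ s := by
  rw [ENNReal.toReal_sum (fun p _ => h p)]
  exact Finset.sum_congr rfl fun p _ => by rw [ENNReal.toReal_mul, ENNReal.toReal_rpow]

lemma phi_anti {ι : Type*} [Fintype ι] (w r : ι → ℝ≥0∞) (hw1 : ∑ p, w p = 1)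
    (hr1 : ∀ p, r p ≤ 1) {t t' : ℝ} (htt : t ≤ t') : phi w r t' ≤ phi w r t := by
  rcases eq_or_lt_of_le htt with rfl | htt'
  · exact le_refl _
  have hwT : ∀ p, w p ≠ ⊤ := by
    intro p
    have : w p ≤ 1 := hw1 ▸ Finset.single_le_sum (f := w) (fun i _ => zero_le) (Finset.mem_univ p)
    exact ne_top_of_le_ne_top ENNReal.one_ne_top this
  have hrT : ∀ p, r p ≠ ⊤ := fun p => ne_top_of_le_ne_top ENNReal.one_ne_top (hr1 p)
  have hwnn : ∀ p, (0:ℝ) ≤ (w p).toReal := fun p => ENNReal.toReal_nonneg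
  have hrnn : ∀ p, (0:ℝ) ≤ (r p).toReal := fun p => ENNReal.toReal_nonneg
  have hw1R : ∑ p, (w p).toReal = 1 := by
    rw [← ENNReal.toReal_sum (fun p _ => hwT p), hw1, ENNReal.toReal_one]
  have hex : ∃ p, w p ≠ 0 := by
    by_contra hc
    push_neg at hc
    rw [Finset.sum_eq_zero (fun i _ => hc i)] at hw1
    exact one_ne_zero hw1.symm
  by_cases hS : ∀ p, r p = 0 → w p = 0
  · -- supported case: everything is a real number
    have hr0 : ∀ p, w p ≠ 0 → r p ≠ 0 := fun p hp h0 => hp (hS p h0)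
    have hsp : ∀ p, (w p).toReal ≠ 0 → 0 < (r p).toReal := by
      intro p hp
      refine ENNReal.toReal_pos (hr0 p ?_) (hrT p)
      intro h0
      exact hp (by simp [h0])
    have hterm : ∀ (s : ℝ) p, w p * r p ^ s ≠ ⊤ := by
      intro s p
      rcases eq_or_ne (w p) 0 with h0 | h0
      · simp [h0]
      · refine ENNReal.mul_ne_top (hwT p) ?_
        intro hT
        rcases ENNReal.rpow_eq_top_iff.1 hT with ⟨h1, _⟩ | ⟨h1, _⟩
        · exact hr0 p h0 h1
        · exact hrT p h1
    have hS0 : ∀ s : ℝ, (∑ p, w p * r p ^ s) ≠ 0 := by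
      intro s hsum
      obtain ⟨p0, hp0⟩ := hex
      have := (Finset.sum_eq_zero_iff.1 hsum) p0 (Finset.mem_univ p0)
      rcases mul_eq_zero.1 this with h | h
      · exact hp0 h
      · rcases ENNReal.rpow_eq_zero_iff.1 h with ⟨h1, _⟩ | ⟨h1, _⟩
        · exact hr0 p0 hp0 h1
        · exact hrT p0 h1
    have hST : ∀ s : ℝ, (∑ p, w p * r p ^ s) ≠ ⊤ := by
      intro s hsum
      exact absurd hsum (by
        simp only [ne_eq, ENNReal.sum_eq_top, not_exists, not_and]
        intro p _
        exact hterm s p)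
    have hpos : ∀ s : ℝ, 0 < ∑ p, (w p).toReal * (r p).toReal ^ s := by
      intro s
      rw [← sum_toReal_rpow w r (hterm s)]
      exact ENNReal.toReal_pos (hS0 s) (hST s)
    have hrep : ∀ s : ℝ, s ≠ 0 → phi w r s
        = ((-(s⁻¹ * Real.log (∑ p, (w p).toReal * (r p).toReal ^ s)) : ℝ) : EReal) := by
      intro s hs
      rw [phi, if_neg hs, log_toReal (hS0 s) (hST s), sum_toReal_rpow w r (hterm s),
        ← EReal.coe_mul]
      congr 1
      ring
    have hrep0 : phi w r 0 = ((-∑ p, (w p).toReal * Real.log (r p).toReal : ℝ) : EReal) := by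
      rw [phi, if_pos rfl, if_pos hS]
    -- real goal
    rcases lt_trichotomy t 0 with ht | ht | ht
    · rcases lt_trichotomy t' 0 with ht' | ht' | ht'
      · rw [hrep t (ne_of_lt ht), hrep t' (ne_of_lt ht'), EReal.coe_le_coe_iff, neg_le_neg_iff]
        exact powmean_neg (fun p => (w p).toReal) (fun p => (r p).toReal)
          hwnn hw1R hrnn hsp htt ht'
      · rw [hrep t (ne_of_lt ht), ht', hrep0, EReal.coe_le_coe_iff, neg_le_neg_iff]
        exact psi_le_log _ _ hwnn hw1R hrnn hsp ht
      · rw [hrep t (ne_of_lt ht), hrep t' (ne_of_gt ht'), EReal.coe_le_coe_iff, neg_le_neg_iff]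
        exact le_trans (psi_le_log _ _ hwnn hw1R hrnn hsp ht)
          (log_le_psi _ _ hwnn hw1R hrnn hsp ht')
    · subst ht
      rw [hrep0, hrep t' (ne_of_gt htt'), EReal.coe_le_coe_iff, neg_le_neg_iff]
      exact log_le_psi _ _ hwnn hw1R hrnn hsp htt'
    · have ht' : 0 < t' := lt_trans ht htt'
      rw [hrep t (ne_of_gt ht), hrep t' (ne_of_gt ht'), EReal.coe_le_coe_iff, neg_le_neg_iff]
      exact powmean_aux (fun p => (w p).toReal) (fun p => (r p).toReal)
        hwnn hw1R hrnn ht (le_of_lt htt') (hpos t)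
  · -- unsupported case
    push_neg at hS
    obtain ⟨p0, hrp0, hwp0⟩ := hS
    rcases lt_trichotomy t 0 with ht | ht | ht
    · have hsumtop : (∑ p, w p * r p ^ t) = ⊤ := by
        refine ENNReal.sum_eq_top.2 ⟨p0, Finset.mem_univ p0, ?_⟩
        rw [hrp0, ENNReal.zero_rpow_of_neg ht, ENNReal.mul_top hwp0]
      have : phi w r t = ⊤ := by
        rw [phi, if_neg (ne_of_lt ht), hsumtop, ENNReal.log_top,
          EReal.coe_mul_top_of_pos (neg_pos.2 (inv_neg''.2 ht))]
      rw [this]; exact le_top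
    · have : phi w r t = ⊤ := by
        subst ht
        rw [phi, if_pos rfl, if_neg]
        push_neg
        exact ⟨p0, hrp0, hwp0⟩
      rw [this]; exact le_top
    · -- 0 < t < t'
      have ht' : 0 < t' := lt_trans ht htt'
      by_cases hz : (∑ p, w p * r p ^ t) = 0
      · have : phi w r t = ⊤ := by
          rw [phi, if_neg (ne_of_gt ht), hz, ENNReal.log_zero,
            EReal.coe_mul_bot_of_neg (neg_neg_of_pos (inv_pos.2 ht))]
        rw [this]; exact le_top
      · have hterm : ∀ (s : ℝ), 0 < s → ∀ p, w p * r p ^ s ≠ ⊤ := by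
          intro s hs p
          exact ENNReal.mul_ne_top (hwT p) (ENNReal.rpow_ne_top_of_nonneg (le_of_lt hs) (hrT p))
        have hST : ∀ (s : ℝ), 0 < s → (∑ p, w p * r p ^ s) ≠ ⊤ := by
          intro s hs hsum
          exact absurd hsum (by
            simp only [ne_eq, ENNReal.sum_eq_top, not_exists, not_and]
            intro p _
            exact hterm s hs p)
        have hz' : (∑ p, w p * r p ^ t') ≠ 0 := by
          intro hsum
          apply hz
          refine Finset.sum_eq_zero fun p _ => ?_
          have := (Finset.sum_eq_zero_iff.1 hsum) p (Finset.mem_univ p)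
          rcases mul_eq_zero.1 this with h | h
          · rw [h, zero_mul]
          · rcases ENNReal.rpow_eq_zero_iff.1 h with ⟨h1, _⟩ | ⟨h1, h2⟩
            · rw [h1, ENNReal.zero_rpow_of_pos ht, mul_zero]
            · exact absurd h1 (hrT p)
        have hpos : 0 < ∑ p, (w p).toReal * (r p).toReal ^ t := by
          rw [← sum_toReal_rpow w r (hterm t ht)]
          exact ENNReal.toReal_pos hz (hST t ht)
        rw [phi, phi, if_neg (ne_of_gt ht), if_neg (ne_of_gt ht'),
          log_toReal hz (hST t ht), log_toReal hz' (hST t' ht'),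
          sum_toReal_rpow w r (hterm t ht), sum_toReal_rpow w r (hterm t' ht'),
          ← EReal.coe_mul, ← EReal.coe_mul, EReal.coe_le_coe_iff]
        have key := powmean_aux (fun p => (w p).toReal) (fun p => (r p).toReal)
          hwnn hw1R hrnn ht (le_of_lt htt') hpos
        nlinarith [key]



lemma bridge {X Y : Type*} [Fintype X] [Fintype Y] (P : X × Y → ℝ≥0∞) (hP : ∑ p, P p = 1)
    (QX : X → ℝ≥0∞) (QY : Y → ℝ≥0∞) (hQX : ∑ x, QX x = 1) (hQY : ∑ y, QY y = 1)
    {α : ℝ} (hα : 0 < α) :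
    relAlphaEnt α P (fun p => QX p.1 * QY p.2) + renyiEnt α P
      = phi P (fun p => (QX p.1 * QY p.2) ^ α) ((α - 1)/α)
        + ENNReal.log (∑ p : X × Y, (QX p.1 * QY p.2) ^ α) := by
  have hPT : ∀ p, P p ≠ ⊤ := by
    intro p
    have : P p ≤ 1 := hP ▸ Finset.single_le_sum (f := P) (fun i _ => zero_le) (Finset.mem_univ p)
    exact ne_top_of_le_ne_top ENNReal.one_ne_top this
  have hQX1 : ∀ x, QX x ≤ 1 := fun x =>
    hQX ▸ Finset.single_le_sum (f := QX) (fun i _ => zero_le) (Finset.mem_univ x)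
  have hQY1 : ∀ y, QY y ≤ 1 := fun y =>
    hQY ▸ Finset.single_le_sum (f := QY) (fun i _ => zero_le) (Finset.mem_univ y)
  have hQ1 : ∀ p : X × Y, QX p.1 * QY p.2 ≤ 1 := fun p =>
    mul_le_one' (hQX1 p.1) (hQY1 p.2)
  have hQT : ∀ p : X × Y, QX p.1 * QY p.2 ≠ ⊤ := fun p =>
    ne_top_of_le_ne_top ENNReal.one_ne_top (hQ1 p)
  by_cases hα1 : α = 1
  · subst hα1
    have hsumQ : (∑ p : X × Y, (QX p.1 * QY p.2) ^ (1:ℝ)) = 1 := by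
      simp only [ENNReal.rpow_one]
      rw [Fintype.sum_prod_type]
      simp only [← Finset.mul_sum, hQY, mul_one, hQX]
    rw [hsumQ, ENNReal.log_one, add_zero]
    rw [relAlphaEnt, if_pos rfl, renyiEnt, if_pos rfl, klDiv]
    simp only [ENNReal.rpow_one]
    by_cases hac : ∀ p : X × Y, QX p.1 * QY p.2 = 0 → P p = 0
    · rw [if_pos hac, phi, if_pos (show ((1:ℝ)-1)/1 = 0 by norm_num), if_pos hac, ← EReal.coe_add, EReal.coe_eq_coe_iff,
        ← Finset.sum_add_distrib, ← Finset.sum_neg_distrib]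
      refine Finset.sum_congr rfl fun p _ => ?_
      rcases eq_or_ne (P p) 0 with h0 | h0
      · simp [h0]
      · have hw : (P p).toReal ≠ 0 := by
          simp [ENNReal.toReal_eq_zero_iff, h0, hPT p]
        have hq0 : QX p.1 * QY p.2 ≠ 0 := fun hq => h0 (hac p hq)
        have hρ : (0:ℝ) < (QX p.1 * QY p.2).toReal := ENNReal.toReal_pos hq0 (hQT p)
        rw [Real.log_div hw (ne_of_gt hρ), Real.log_inv]
        ring
    · rw [if_neg hac, phi, if_pos (show ((1:ℝ)-1)/1 = 0 by norm_num), if_neg hac, EReal.top_add_coe]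
  · have ht : (α - 1)/α ≠ 0 := div_ne_zero (sub_ne_zero.2 hα1) (ne_of_gt hα)
    have hU0 : (∑ p, P p ^ α) ≠ 0 := by
      intro hsum
      have hex : ∃ p, P p ≠ 0 := by
        by_contra hc
        push_neg at hc
        rw [Finset.sum_eq_zero (fun i _ => hc i)] at hP
        exact one_ne_zero hP.symm
      obtain ⟨p0, hp0⟩ := hex
      have := (Finset.sum_eq_zero_iff.1 hsum) p0 (Finset.mem_univ p0)
      rcases ENNReal.rpow_eq_zero_iff.1 this with ⟨h1, _⟩ | ⟨h1, _⟩
      · exact hp0 h1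
      · exact hPT p0 h1
    have hUT : (∑ p, P p ^ α) ≠ ⊤ := by
      intro hsum
      exact absurd hsum (by
        simp only [ne_eq, ENNReal.sum_eq_top, not_exists, not_and]
        intro p _
        exact ENNReal.rpow_ne_top_of_nonneg (le_of_lt hα) (hPT p))
    rw [relAlphaEnt, if_neg hα1, renyiEnt, if_neg hα1, phi, if_neg ht,
      log_toReal hU0 hUT, ← EReal.coe_mul, EReal.sub_add_cancel]
    have hT : (∑ p : X × Y, P p * (QX p.1 * QY p.2) ^ (α - 1))
        = ∑ p : X × Y, P p * ((QX p.1 * QY p.2) ^ α) ^ ((α - 1)/α) := by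
      refine Finset.sum_congr rfl fun p _ => ?_
      rw [← ENNReal.rpow_mul]
      congr 2
      field_simp
    have hcoef : (α / (1 - α) : ℝ) = -((α - 1)/α)⁻¹ := by
      have h1 : α - 1 ≠ 0 := sub_ne_zero.2 hα1
      have h2 : (1:ℝ) - α ≠ 0 := sub_ne_zero.2 (Ne.symm hα1)
      field_simp
      ring
    rw [hT, hcoef]

lemma ereal_mul_add_coe (a b : ℝ) (x : EReal) :
    (a : EReal) * (x + (b : EReal)) = (a : EReal) * x + ((a * b : ℝ) : EReal) := by
  induction x with
  | bot =>
    rcases lt_trichotomy a 0 with ha | ha | ha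
    · rw [EReal.bot_add, EReal.coe_mul_bot_of_neg ha, EReal.top_add_coe]
    · subst ha
      simp
    · rw [EReal.bot_add, EReal.coe_mul_bot_of_pos ha, EReal.bot_add]
  | coe x =>
    norm_cast
    ring
  | top =>
    rcases lt_trichotomy a 0 with ha | ha | ha
    · rw [EReal.top_add_coe, EReal.coe_mul_top_of_neg ha, EReal.bot_add]
    · subst ha
      simp
    · rw [EReal.top_add_coe, EReal.coe_mul_top_of_pos ha, EReal.top_add_coe]

lemma phi_smul {ι : Type*} [Fintype ι] (w r : ι → ℝ≥0∞) (c : ℝ≥0∞)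
    (hw1 : ∑ p, w p = 1) (hrT : ∀ p, r p ≠ ⊤)
    (hr0 : (∑ p, r p) ≠ 0) (hrS : (∑ p, r p) ≠ ⊤)
    (hc0 : c ≠ 0) (hcT : c ≠ ⊤) (t : ℝ) :
    phi w (fun p => r p * c) t + ENNReal.log (∑ p, r p * c)
      = phi w r t + ENNReal.log (∑ p, r p) := by
  have hwT : ∀ p, w p ≠ ⊤ := by
    intro p
    have : w p ≤ 1 := hw1 ▸ Finset.single_le_sum (f := w) (fun i _ => zero_le) (Finset.mem_univ p)
    exact ne_top_of_le_ne_top ENNReal.one_ne_top this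
  have hw1R : ∑ p, (w p).toReal = 1 := by
    rw [← ENNReal.toReal_sum (fun p _ => hwT p), hw1, ENNReal.toReal_one]
  set lc := Real.log c.toReal with hlc
  have hlogc : ENNReal.log c = (lc : EReal) := log_toReal hc0 hcT
  set v := Real.log (∑ p, r p).toReal with hv
  have hlogr : ENNReal.log (∑ p, r p) = (v : EReal) := log_toReal hr0 hrS
  have hsum : (∑ p, r p * c) = (∑ p, r p) * c := (Finset.sum_mul _ _ _).symm
  have hlogsum : ENNReal.log (∑ p, r p * c) = ((v + lc : ℝ) : EReal) := by
    rw [hsum, ENNReal.log_mul_add, hlogc, hlogr, ← EReal.coe_add]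
  by_cases ht : t = 0
  · subst ht
    by_cases hsupp : ∀ p, r p = 0 → w p = 0
    · have hsupp' : ∀ p, r p * c = 0 → w p = 0 := by
        intro p hp
        rcases mul_eq_zero.1 hp with h | h
        · exact hsupp p h
        · exact absurd h hc0
      rw [phi, if_pos rfl, if_pos hsupp', phi, if_pos rfl, if_pos hsupp, hlogsum, hlogr,
        ← EReal.coe_add, ← EReal.coe_add, EReal.coe_eq_coe_iff]
      have hterm : ∀ p, (w p).toReal * Real.log (r p * c).toReal
          = (w p).toReal * Real.log (r p).toReal + (w p).toReal * lc := by
        intro p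
        rcases eq_or_ne (w p) 0 with h0 | h0
        · simp [h0]
        · have hrp : r p ≠ 0 := fun h => h0 (hsupp p h)
          have hρ : (0:ℝ) < (r p).toReal := ENNReal.toReal_pos hrp (hrT p)
          have hcc : (0:ℝ) < c.toReal := ENNReal.toReal_pos hc0 hcT
          rw [ENNReal.toReal_mul, Real.log_mul (ne_of_gt hρ) (ne_of_gt hcc)]
          ring
      have : ∑ p, (w p).toReal * Real.log (r p * c).toReal
          = (∑ p, (w p).toReal * Real.log (r p).toReal) + lc := by
        rw [Finset.sum_congr rfl (fun p _ => hterm p), Finset.sum_add_distrib,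
          ← Finset.sum_mul, hw1R, one_mul]
      rw [this]
      ring
    · have hsupp' : ¬ ∀ p, r p * c = 0 → w p = 0 := by
        intro hcon
        exact hsupp fun p hp => hcon p (by rw [hp, zero_mul])
      rw [phi, if_pos rfl, if_neg hsupp', phi, if_pos rfl, if_neg hsupp, hlogsum, hlogr,
        EReal.top_add_coe, EReal.top_add_coe]
  · have hrc : (∑ p, w p * (r p * c) ^ t) = (∑ p, w p * r p ^ t) * c ^ t := by
      calc ∑ p, w p * (r p * c) ^ t
          = ∑ p, (w p * r p ^ t) * c ^ t := Finset.sum_congr rfl fun p _ => by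
            rw [ENNReal.mul_rpow_of_ne_top (hrT p) hcT, mul_assoc]
        _ = (∑ p, w p * r p ^ t) * c ^ t := (Finset.sum_mul _ _ _).symm
    have hct0 : (c : ℝ≥0∞) ^ t ≠ 0 := by
      intro h
      rcases ENNReal.rpow_eq_zero_iff.1 h with ⟨h1, _⟩ | ⟨h1, _⟩
      · exact hc0 h1
      · exact hcT h1
    have hctT : (c : ℝ≥0∞) ^ t ≠ ⊤ := by
      intro h
      rcases ENNReal.rpow_eq_top_iff.1 h with ⟨h1, _⟩ | ⟨h1, _⟩
      · exact hc0 h1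
      · exact hcT h1
    rw [phi, if_neg ht, phi, if_neg ht, hlogsum, hlogr, hrc, ENNReal.log_mul_add,
      ENNReal.log_rpow, hlogc]
    rw [← EReal.coe_mul]
    rw [ereal_mul_add_coe (-t⁻¹) (t * lc) ((∑ p, w p * r p ^ t).log)]
    have h1 : (-t⁻¹ * (t * lc) : ℝ) = -lc := by
      field_simp
    rw [add_assoc, ← EReal.coe_add]
    congr 1
    rw [EReal.coe_eq_coe_iff, h1]
    ring

theorem stmt18 {X Y : Type*} [Fintype X] [Fintype Y] (P : X × Y → ℝ≥0∞)
    (hP : ∑ p, P p = 1) (α α' : ℝ) (hα : 0 < α) (h : α ≤ α') :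
    Kalpha α' P + renyiEnt α' P ≤ Kalpha α P + renyiEnt α P := by
  have hα' : 0 < α' := lt_of_lt_of_le hα h
  have hPT : ∀ p, P p ≠ ⊤ := by
    intro p
    have : P p ≤ 1 := hP ▸ Finset.single_le_sum (f := P) (fun i _ => zero_le) (Finset.mem_univ p)
    exact ne_top_of_le_ne_top ENNReal.one_ne_top this
  have hPex : ∃ p, P p ≠ 0 := by
    by_contra hc
    push_neg at hc
    rw [Finset.sum_eq_zero (fun i _ => hc i)] at hP
    exact one_ne_zero hP.symm
  have hU0 : ∀ γ : ℝ, (∑ p, P p ^ γ) ≠ 0 := by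
    intro γ hsum
    obtain ⟨p0, hp0⟩ := hPex
    have := (Finset.sum_eq_zero_iff.1 hsum) p0 (Finset.mem_univ p0)
    rcases ENNReal.rpow_eq_zero_iff.1 this with ⟨h1, _⟩ | ⟨h1, _⟩
    · exact hp0 h1
    · exact hPT p0 h1
  have hUT : ∀ γ : ℝ, 0 < γ → (∑ p, P p ^ γ) ≠ ⊤ := by
    intro γ hγ hsum
    exact absurd hsum (by
      simp only [ne_eq, ENNReal.sum_eq_top, not_exists, not_and]
      intro p _
      exact ENNReal.rpow_ne_top_of_nonneg (le_of_lt hγ) (hPT p))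
  have hH : ∀ γ : ℝ, 0 < γ → ∃ cH : ℝ, renyiEnt γ P = (cH : EReal) := by
    intro γ hγ
    rw [renyiEnt]
    split_ifs with h1
    · exact ⟨_, rfl⟩
    · refine ⟨(1 - γ)⁻¹ * Real.log (∑ p, P p ^ γ).toReal, ?_⟩
      rw [log_toReal (hU0 γ) (hUT γ hγ), ← EReal.coe_mul]
  -- the key pointwise inequality
  have key : ∀ Q : PMFon X × PMFon Y, ∃ Q' : PMFon X × PMFon Y,
      relAlphaEnt α' P (fun p => Q'.1.1 p.1 * Q'.2.1 p.2) + renyiEnt α' P ≤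
        relAlphaEnt α P (fun p => Q.1.1 p.1 * Q.2.1 p.2) + renyiEnt α P := by
    rintro ⟨⟨QX, hQX⟩, ⟨QY, hQY⟩⟩
    set β := α / α' with hβdef
    have hβ : 0 < β := div_pos hα hα'
    have hQX1 : ∀ x, QX x ≤ 1 := fun x =>
      hQX ▸ Finset.single_le_sum (f := QX) (fun i _ => zero_le) (Finset.mem_univ x)
    have hQY1 : ∀ y, QY y ≤ 1 := fun y =>
      hQY ▸ Finset.single_le_sum (f := QY) (fun i _ => zero_le) (Finset.mem_univ y)
    have hQXT : ∀ x, QX x ≠ ⊤ := fun x => ne_top_of_le_ne_top ENNReal.one_ne_top (hQX1 x)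
    have hQYT : ∀ y, QY y ≠ ⊤ := fun y => ne_top_of_le_ne_top ENNReal.one_ne_top (hQY1 y)
    set NX := ∑ x, QX x ^ β with hNXdef
    set NY := ∑ y, QY y ^ β with hNYdef
    have hQXex : ∃ x, QX x ≠ 0 := by
      by_contra hc
      push_neg at hc
      rw [Finset.sum_eq_zero (fun i _ => hc i)] at hQX
      exact one_ne_zero hQX.symm
    have hQYex : ∃ y, QY y ≠ 0 := by
      by_contra hc
      push_neg at hc
      rw [Finset.sum_eq_zero (fun i _ => hc i)] at hQY
      exact one_ne_zero hQY.symm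
    have hNX0 : NX ≠ 0 := by
      intro hsum
      obtain ⟨x0, hx0⟩ := hQXex
      have := (Finset.sum_eq_zero_iff.1 hsum) x0 (Finset.mem_univ x0)
      rcases ENNReal.rpow_eq_zero_iff.1 this with ⟨h1, _⟩ | ⟨h1, _⟩
      · exact hx0 h1
      · exact hQXT x0 h1
    have hNY0 : NY ≠ 0 := by
      intro hsum
      obtain ⟨y0, hy0⟩ := hQYex
      have := (Finset.sum_eq_zero_iff.1 hsum) y0 (Finset.mem_univ y0)
      rcases ENNReal.rpow_eq_zero_iff.1 this with ⟨h1, _⟩ | ⟨h1, _⟩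
      · exact hy0 h1
      · exact hQYT y0 h1
    have hNXT : NX ≠ ⊤ := by
      rw [hNXdef]
      simp only [ne_eq, ENNReal.sum_eq_top, not_exists, not_and]
      intro x _
      exact ENNReal.rpow_ne_top_of_nonneg (le_of_lt hβ) (hQXT x)
    have hNYT : NY ≠ ⊤ := by
      rw [hNYdef]
      simp only [ne_eq, ENNReal.sum_eq_top, not_exists, not_and]
      intro y _
      exact ENNReal.rpow_ne_top_of_nonneg (le_of_lt hβ) (hQYT y)
    have hQX' : ∑ x, QX x ^ β * NX⁻¹ = 1 := by
      rw [← Finset.sum_mul, ENNReal.mul_inv_cancel hNX0 hNXT]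
    have hQY' : ∑ y, QY y ^ β * NY⁻¹ = 1 := by
      rw [← Finset.sum_mul, ENNReal.mul_inv_cancel hNY0 hNYT]
    refine ⟨⟨⟨fun x => QX x ^ β * NX⁻¹, hQX'⟩, ⟨fun y => QY y ^ β * NY⁻¹, hQY'⟩⟩, ?_⟩
    show relAlphaEnt α' P (fun p => (QX p.1 ^ β * NX⁻¹) * (QY p.2 ^ β * NY⁻¹)) + renyiEnt α' P
      ≤ relAlphaEnt α P (fun p => QX p.1 * QY p.2) + renyiEnt α P
    rw [bridge P hP _ _ hQX' hQY' hα', bridge P hP QX QY hQX hQY hα]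
    -- rewrite the scaled kernel
    set c : ℝ≥0∞ := ((NX * NY) ^ α')⁻¹ with hcdef
    have hNXY0 : NX * NY ≠ 0 := mul_ne_zero hNX0 hNY0
    have hNXYT : NX * NY ≠ ⊤ := ENNReal.mul_ne_top hNXT hNYT
    have hc0 : c ≠ 0 := by
      rw [hcdef]
      simp only [ne_eq, ENNReal.inv_eq_zero]
      intro hsum
      rcases ENNReal.rpow_eq_top_iff.1 hsum with ⟨h1, _⟩ | ⟨h1, _⟩
      · exact hNXY0 h1
      · exact hNXYT h1
    have hcT : c ≠ ⊤ := by
      rw [hcdef]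
      simp only [ne_eq, ENNReal.inv_eq_top]
      intro hsum
      rcases ENNReal.rpow_eq_zero_iff.1 hsum with ⟨h1, _⟩ | ⟨h1, _⟩
      · exact hNXY0 h1
      · exact hNXYT h1
    have hkernel : (fun p : X × Y => ((QX p.1 ^ β * NX⁻¹) * (QY p.2 ^ β * NY⁻¹)) ^ α')
        = fun p : X × Y => ((QX p.1 * QY p.2) ^ α) * c := by
      funext p
      have e1 : (QX p.1 ^ β * NX⁻¹) * (QY p.2 ^ β * NY⁻¹)
          = (QX p.1 * QY p.2) ^ β * (NX * NY)⁻¹ := by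
        rw [ENNReal.mul_rpow_of_nonneg _ _ (le_of_lt hβ),
          ENNReal.mul_inv (Or.inl hNX0) (Or.inl hNXT)]
        ring
      rw [e1, ENNReal.mul_rpow_of_nonneg _ _ (le_of_lt hα'),
        ← ENNReal.rpow_mul, ENNReal.inv_rpow, hcdef]
      congr 2
      rw [hβdef]
      field_simp
    rw [hkernel]
    have hrT : ∀ p : X × Y, (QX p.1 * QY p.2) ^ α ≠ ⊤ := by
      intro p
      exact ENNReal.rpow_ne_top_of_nonneg (le_of_lt hα)
        (ENNReal.mul_ne_top (hQXT p.1) (hQYT p.2))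
    have hr1 : ∀ p : X × Y, (QX p.1 * QY p.2) ^ α ≤ 1 := fun p =>
      ENNReal.rpow_le_one (mul_le_one' (hQX1 p.1) (hQY1 p.2)) (le_of_lt hα)
    have hrS0 : (∑ p : X × Y, (QX p.1 * QY p.2) ^ α) ≠ 0 := by
      intro hsum
      obtain ⟨x0, hx0⟩ := hQXex
      obtain ⟨y0, hy0⟩ := hQYex
      have := (Finset.sum_eq_zero_iff.1 hsum) (x0, y0) (Finset.mem_univ _)
      rcases ENNReal.rpow_eq_zero_iff.1 this with ⟨h1, _⟩ | ⟨h1, _⟩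
      · exact absurd h1 (mul_ne_zero hx0 hy0)
      · exact absurd h1 (ENNReal.mul_ne_top (hQXT x0) (hQYT y0))
    have hrST : (∑ p : X × Y, (QX p.1 * QY p.2) ^ α) ≠ ⊤ := by
      intro hsum
      exact absurd hsum (by
        simp only [ne_eq, ENNReal.sum_eq_top, not_exists, not_and]
        intro p _
        exact hrT p)
    rw [phi_smul P (fun p : X × Y => (QX p.1 * QY p.2) ^ α) c hP hrT hrS0 hrST hc0 hcT]
    have htt : (α - 1)/α ≤ (α' - 1)/α' := by
      have e1 : (α - 1)/α = 1 - α⁻¹ := by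
        field_simp
      have e2 : (α' - 1)/α' = 1 - α'⁻¹ := by
        field_simp
      have e3 : α'⁻¹ ≤ α⁻¹ := by
        exact inv_anti₀ hα h
      rw [e1, e2]
      linarith
    exact add_le_add_left (phi_anti P _ hP hr1 htt) _
  -- assemble
  obtain ⟨c', hc'⟩ := hH α' hα'
  obtain ⟨cc, hcc⟩ := hH α hα
  rw [hc', hcc]
  have step : ∀ Q : PMFon X × PMFon Y,
      Kalpha α' P + (c' : EReal) ≤ relAlphaEnt α P (fun p => Q.1.1 p.1 * Q.2.1 p.2) + cc := by
    intro Q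
    obtain ⟨Q', hQ'⟩ := key Q
    rw [hc', hcc] at hQ'
    refine le_trans (add_le_add_left ?_ _) hQ'
    exact iInf_le _ Q'
  have step2 : Kalpha α' P + (c' : EReal) - (cc : EReal) ≤ Kalpha α P := by
    rw [Kalpha]
    refine le_iInf fun Q => ?_
    exact (EReal.sub_le_iff_le_add (Or.inl (EReal.coe_ne_bot cc))
      (Or.inl (EReal.coe_ne_top cc))).2 (step Q)
  exact (EReal.sub_le_iff_le_add (Or.inl (EReal.coe_ne_bot cc))
    (Or.inl (EReal.coe_ne_top cc))).1 step2
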